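/- arXiv:0911.0434 — 3 statements merged into one kernel-verified Lean document; each statement's English description precedes it below -/
import Mathlib

section
/- With the setup of the iteration map Θ(Λ) = ∫ Λ^{1/2} G (Ψ/(G*ΛG)) G* Λ^{1/2}, for any positive semidefinite Hermitian Λ such that G*ΛG > 0 on the unit circle, the kernel of Θ(Λ) equals the kernel of Λ; in particular Θ(Λ) has the same rank as Λ, and if Λ > 0 then Θ(Λ) > 0. -/
open Matrix MeasureTheory Real Filter
open scoped ComplexOrder

noncomputable section

abbrev Mat (n : ℕ) := Matrix (Fin n) (Fin n) ℂ
abbrev Vec (n : ℕ) := Matrix (Fin n) (Fin 1) ℂ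

/-- the point e^{jθ} on the unit circle -/
def circPt (θ : ℝ) : ℂ := Complex.exp (θ * Complex.I)

/-- G(e^{jθ}) = (e^{jθ} I - A)⁻¹ B -/
def Gm {n : ℕ} (A : Mat n) (B : Vec n) (θ : ℝ) : Vec n :=
  (circPt θ • (1 : Mat n) - A)⁻¹ * B

/-- the scalar G* Λ G at e^{jθ} -/
def quad {n : ℕ} (A : Mat n) (B : Vec n) (Λ : Mat n) (θ : ℝ) : ℂ :=
  ((Gm A B θ)ᴴ * Λ * Gm A B θ) 0 0

/-- normalized entrywise matrix integral over the unit circle -/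
def mInt {n : ℕ} (f : ℝ → Mat n) : Mat n :=
  Matrix.of fun i j => (1 / (2 * π) : ℝ) • ∫ θ in (0:ℝ)..(2 * π), f θ i j

/-- normalized scalar (complex) integral over the unit circle -/
def sInt (f : ℝ → ℂ) : ℂ := (1 / (2 * π) : ℝ) • ∫ θ in (0:ℝ)..(2 * π), f θ

/-- normalized scalar (real) integral over the unit circle -/
def sIntR (f : ℝ → ℝ) : ℝ := (1 / (2 * π)) * ∫ θ in (0:ℝ)..(2 * π), f θ

/-- all eigenvalues of A lie in the open unit disc -/
def IsStable {n : ℕ} (A : Mat n) : Prop := ∀ μ ∈ spectrum ℂ A, ‖μ‖ < 1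

/-- (A,B) is a reachable pair: the controllability matrix has full rank -/
def Reachable {n : ℕ} (A : Mat n) (B : Vec n) : Prop :=
  (Matrix.of fun (i : Fin n) (k : Fin n) => (A ^ (k : ℕ) * B) i 0).rank = n

open scoped Classical in
/-- positive semidefinite square root (junk value 0 off the psd cone) -/
def msqrt {n : ℕ} (M : Mat n) : Mat n :=
  if h : M.PosSemidef then
    (h.1.eigenvectorUnitary : Mat n) * diagonal ((↑) ∘ Real.sqrt ∘ h.1.eigenvalues) *
      (star h.1.eigenvectorUnitary : Mat n) else 0

/-- the moment map ∫ G (Ψ/(G*ΛG)) G* -/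
def moment {n : ℕ} (A : Mat n) (B : Vec n) (Ψ : ℝ → ℝ) (Λ : Mat n) : Mat n :=
  mInt (fun θ => ((Ψ θ : ℂ) / quad A B Λ θ) • (Gm A B θ * (Gm A B θ)ᴴ))

/-- the iteration map Θ(Λ) = ∫ Λ^{1/2} G (Ψ/(G*ΛG)) G* Λ^{1/2} -/
def Theta {n : ℕ} (A : Mat n) (B : Vec n) (Ψ : ℝ → ℝ) (Λ : Mat n) : Mat n :=
  mInt (fun θ => ((Ψ θ : ℂ) / quad A B Λ θ) •
    (msqrt Λ * (Gm A B θ * (Gm A B θ)ᴴ) * msqrt Λ))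

/-- the linearization M of Θ at Λ:
M(X) = X - Λ^{1/2} ∫ (GΨG*/(G*ΛG)) (G*XG/(G*ΛG)) Λ^{1/2} -/
def Mlin {n : ℕ} (A : Mat n) (B : Vec n) (Ψ : ℝ → ℝ) (Λ : Mat n) (X : Mat n) : Mat n :=
  X - msqrt Λ * mInt (fun θ =>
    (((Ψ θ : ℂ) * (((Gm A B θ)ᴴ * X * Gm A B θ) 0 0)) / (quad A B Λ θ) ^ 2) •
      (Gm A B θ * (Gm A B θ)ᴴ)) * msqrt Λ

/-- the range of the operator Γ : Φ ↦ ∫ G Φ G* on continuous (2π-periodic) functions -/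
def RangeGamma {n : ℕ} (A : Mat n) (B : Vec n) : Set (Mat n) :=
  {M | ∃ Φ : ℝ → ℝ, Continuous Φ ∧ (∀ θ, Φ (θ + 2 * π) = Φ θ) ∧
    M = mInt (fun θ => (Φ θ : ℂ) • (Gm A B θ * (Gm A B θ)ᴴ))}

/-! ### Auxiliary lemmas -/

section Aux

open Polynomial

variable {n : ℕ}

lemma circPt_norm (θ : ℝ) : ‖circPt θ‖ = 1 := by
  simp [circPt, Complex.norm_exp]

lemma circPt_continuous : Continuous circPt :=
  Complex.continuous_exp.comp (Complex.continuous_ofReal.mul continuous_const)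

lemma circPt_injOn : Set.InjOn circPt (Set.Ioo 0 (2 * π)) := by
  intro a ha b hb hab
  rw [circPt, circPt, Complex.exp_eq_exp_iff_exists_int] at hab
  obtain ⟨k, hk⟩ := hab
  have him : a = b + (k : ℝ) * (2 * π) := by
    have := congrArg Complex.im hk
    simpa using this
  have hπ := Real.pi_pos
  have hk0 : k = 0 := by
    rcases lt_trichotomy k 0 with h | h | h
    · have hle : (k : ℝ) ≤ -1 := by exact_mod_cast (by omega : k ≤ -1)
      nlinarith [ha.1, ha.2, hb.1, hb.2]
    · exact h
    · have hle : (1 : ℝ) ≤ (k : ℝ) := by exact_mod_cast h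
      nlinarith [ha.1, ha.2, hb.1, hb.2]
  simp [hk0] at him
  exact him

lemma isUnit_circ (A : Mat n) (hA : IsStable A) (θ : ℝ) :
    IsUnit (circPt θ • (1 : Mat n) - A) := by
  have h1 : circPt θ ∉ spectrum ℂ A := fun h => by
    have := hA _ h; rw [circPt_norm] at this; exact lt_irrefl 1 this
  have := spectrum.notMem_iff.mp h1
  rwa [Algebra.algebraMap_eq_smul_one] at this

lemma det_circ_ne (A : Mat n) (hA : IsStable A) (θ : ℝ) :
    (circPt θ • (1 : Mat n) - A).det ≠ 0 :=
  ((Matrix.isUnit_iff_isUnit_det _).mp (isUnit_circ A hA θ)).ne_zero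

lemma inv_eq_det_smul (M : Mat n) : M⁻¹ = (M.det)⁻¹ • M.adjugate := by
  rw [Matrix.inv_def, Ring.inverse_eq_inv']

lemma cont_inv (A : Mat n) (hA : IsStable A) :
    Continuous fun θ => (circPt θ • (1 : Mat n) - A)⁻¹ := by
  have hM : Continuous fun θ => circPt θ • (1 : Mat n) - A :=
    (circPt_continuous.smul continuous_const).sub continuous_const
  simp only [inv_eq_det_smul]
  exact (hM.matrix_det.inv₀ (det_circ_ne A hA)).smul hM.matrix_adjugate

lemma cont_G (A : Mat n) (B : Vec n) (hA : IsStable A) :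
    Continuous fun θ => Gm A B θ := by
  unfold Gm
  exact (cont_inv A hA).matrix_mul continuous_const

lemma vanish {g : ℝ → ℝ} (hg : Continuous g) (hpos : ∀ θ, 0 ≤ g θ)
    (hI : ∫ θ in (0:ℝ)..(2 * π), g θ = 0) :
    ∀ θ ∈ Set.Ioo (0:ℝ) (2 * π), g θ = 0 := by
  have h2π : (0:ℝ) ≤ 2 * π := by positivity
  have hint : IntervalIntegrable g volume 0 (2 * π) := hg.intervalIntegrable _ _
  have hae := (intervalIntegral.integral_eq_zero_iff_of_le_of_nonneg_ae h2π
      (Filter.Eventually.of_forall fun x => hpos x) hint).mp hI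
  intro θ hθ
  by_contra hne
  have hgpos : 0 < g θ := lt_of_le_of_ne (hpos θ) (Ne.symm hne)
  have hUopen : IsOpen ({x | 0 < g x} ∩ Set.Ioo 0 (2 * π)) :=
    (isOpen_lt continuous_const hg).inter isOpen_Ioo
  have hUpos : 0 < volume ({x | 0 < g x} ∩ Set.Ioo 0 (2 * π)) :=
    hUopen.measure_pos volume ⟨θ, hgpos, hθ⟩
  have hmeas : MeasurableSet {x | g x ≠ 0} :=
    hg.measurable (measurableSet_singleton (0:ℝ)).compl
  have hnull : volume ({x | g x ≠ 0} ∩ Set.Ioc 0 (2 * π)) = 0 := by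
    have hae' : ∀ᵐ x ∂(volume.restrict (Set.Ioc 0 (2 * π))), g x = 0 := by
      simpa [Filter.EventuallyEq] using hae
    have := MeasureTheory.ae_iff.mp hae'
    rwa [Measure.restrict_apply hmeas] at this
  have hsub : ({x | 0 < g x} ∩ Set.Ioo 0 (2 * π)) ⊆ {x | g x ≠ 0} ∩ Set.Ioc 0 (2 * π) :=
    fun x hx => ⟨ne_of_gt hx.1, Set.Ioo_subset_Ioc_self hx.2⟩
  exact absurd (le_antisymm (hnull ▸ measure_mono hsub) zero_le) (ne_of_gt hUpos)

lemma charmatrix_eval (A : Mat n) (z : ℂ) :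
    (charmatrix A).map (Polynomial.eval z) = z • (1 : Mat n) - A := by
  ext i j
  by_cases hij : i = j <;>
    simp [hij, charmatrix_apply_eq, charmatrix_apply_ne, Matrix.map_apply,
      Matrix.sub_apply, Matrix.smul_apply, Matrix.one_apply, smul_eq_mul]

lemma adj_eval (A : Mat n) (z : ℂ) (i j : Fin n) :
    ((charmatrix A).adjugate i j).eval z = (z • (1 : Mat n) - A).adjugate i j := by
  have h := (Polynomial.evalRingHom z).map_adjugate (charmatrix A)
  have h2 := congrFun (congrFun (congrArg (fun M => (M : Matrix (Fin n) (Fin n) ℂ)) h) i) j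
  simp only [RingHom.mapMatrix_apply] at h2
  rw [show (charmatrix A).map (Polynomial.evalRingHom z : Polynomial ℂ →+* ℂ)
      = (charmatrix A).map (Polynomial.eval z) from rfl, charmatrix_eval] at h2
  simpa [Matrix.map_apply] using h2

lemma adj_dot_zero_all (A : Mat n) (w u : Fin n → ℂ)
    (h : ∀ θ ∈ Set.Ioo (0:ℝ) (2 * π),
      w ⬝ᵥ ((circPt θ • (1 : Mat n) - A).adjugate *ᵥ u) = 0) :
    ∀ z : ℂ, w ⬝ᵥ ((z • (1 : Mat n) - A).adjugate *ᵥ u) = 0 := by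
  classical
  set p : Polynomial ℂ :=
    ∑ i, ∑ j, Polynomial.C (w i) * (charmatrix A).adjugate i j * Polynomial.C (u j) with hp
  have hev : ∀ z : ℂ, p.eval z = w ⬝ᵥ ((z • (1 : Mat n) - A).adjugate *ᵥ u) := by
    intro z
    simp only [hp, Polynomial.eval_finset_sum, Polynomial.eval_mul, Polynomial.eval_C,
      adj_eval, dotProduct, Matrix.mulVec, Finset.mul_sum, mul_assoc]
  have hp0 : p = 0 := by
    apply Polynomial.eq_zero_of_infinite_isRoot
    apply Set.Infinite.mono (s := circPt '' Set.Ioo 0 (2 * π))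
    · rintro z ⟨θ, hθ, rfl⟩
      rw [Set.mem_setOf_eq, Polynomial.IsRoot, hev]
      exact h θ hθ
    · exact Set.Infinite.image circPt_injOn (Set.Ioo_infinite (by positivity))
  intro z
  rw [← hev, hp0, Polynomial.eval_zero]

lemma dot_eq_zero (A : Mat n) (w u : Fin n → ℂ)
    (h : ∀ z : ℂ, w ⬝ᵥ ((z • (1 : Mat n) - A).adjugate *ᵥ u) = 0) :
    w ⬝ᵥ u = 0 := by
  have h1 : Tendsto (fun t : ℝ => (1 : Mat n) - ((t:ℂ))⁻¹ • A) atTop (nhds 1) := by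
    have h2 : Tendsto (fun t : ℝ => ((t:ℂ))⁻¹) atTop (nhds 0) := by
      have := (Complex.continuous_ofReal.tendsto 0).comp tendsto_inv_atTop_zero
      rw [Complex.ofReal_zero] at this
      exact this.congr fun t => Complex.ofReal_inv t
    have h3 := h2.smul_const A
    rw [zero_smul] at h3
    simpa using tendsto_const_nhds.sub h3
  have hφ : ContinuousAt (fun M : Mat n => (M.det)⁻¹ * (w ⬝ᵥ (M.adjugate *ᵥ u))) 1 := by
    have hd : ContinuousAt (fun M : Mat n => (M.det)⁻¹) 1 :=
      ((continuous_id.matrix_det).continuousAt).inv₀ (by simp)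
    have hrest : Continuous fun M : Mat n => w ⬝ᵥ (M.adjugate *ᵥ u) :=
      continuous_const.dotProduct
        ((continuous_id.matrix_adjugate).matrix_mulVec continuous_const)
    exact hd.mul hrest.continuousAt
  have hlim : Tendsto
      (fun t : ℝ => ((((1 : Mat n) - ((t:ℂ))⁻¹ • A).det)⁻¹ *
        (w ⬝ᵥ (((1 : Mat n) - ((t:ℂ))⁻¹ • A).adjugate *ᵥ u)))) atTop
      (nhds (w ⬝ᵥ u)) := by
    have := hφ.tendsto.comp h1
    simpa [Function.comp_def, Matrix.det_one, Matrix.adjugate_one] using this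
  have hev : ∀ᶠ t : ℝ in atTop,
      ((((1 : Mat n) - ((t:ℂ))⁻¹ • A).det)⁻¹ *
        (w ⬝ᵥ (((1 : Mat n) - ((t:ℂ))⁻¹ • A).adjugate *ᵥ u))) = 0 := by
    filter_upwards [eventually_gt_atTop (0:ℝ)] with t ht
    have htne : ((t:ℂ)) ≠ 0 := by exact_mod_cast ne_of_gt ht
    have hfact : (1 : Mat n) - ((t:ℂ))⁻¹ • A = ((t:ℂ))⁻¹ • ((t:ℂ) • (1 : Mat n) - A) := by
      rw [smul_sub, smul_smul, inv_mul_cancel₀ htne, one_smul]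
    rw [hfact, Matrix.adjugate_smul, Matrix.smul_mulVec, dotProduct_smul,
      h ((t:ℂ))]
    simp
  exact tendsto_nhds_unique (hlim.congr' hev) tendsto_const_nhds

lemma adj_dot_A (A : Mat n) (w u : Fin n → ℂ)
    (h : ∀ z : ℂ, w ⬝ᵥ ((z • (1 : Mat n) - A).adjugate *ᵥ u) = 0) :
    ∀ z : ℂ, w ⬝ᵥ ((z • (1 : Mat n) - A).adjugate *ᵥ (A *ᵥ u)) = 0 := by
  have hwu := dot_eq_zero A w u h
  intro z
  set M : Mat n := z • (1 : Mat n) - A with hM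
  have hAz : M.adjugate * A = z • M.adjugate - M.det • (1 : Mat n) := by
    have hA' : A = z • (1 : Mat n) - M := (sub_sub_cancel _ _).symm
    calc M.adjugate * A = M.adjugate * (z • (1 : Mat n)) - M.adjugate * M := by
          rw [← Matrix.mul_sub, ← hA']
      _ = z • M.adjugate - M.det • (1 : Mat n) := by
          rw [Matrix.mul_smul, Matrix.mul_one, Matrix.adjugate_mul]
  rw [Matrix.mulVec_mulVec, hAz, Matrix.sub_mulVec, Matrix.smul_mulVec,
    Matrix.smul_mulVec, Matrix.one_mulVec, dotProduct_sub,
    dotProduct_smul, dotProduct_smul, h z, hwu]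
  simp

lemma dot_pow (A : Mat n) (w : Fin n → ℂ) :
    ∀ (u : Fin n → ℂ),
      (∀ z : ℂ, w ⬝ᵥ ((z • (1 : Mat n) - A).adjugate *ᵥ u) = 0) →
      ∀ k : ℕ, w ⬝ᵥ ((A ^ k) *ᵥ u) = 0 := by
  intro u h k
  induction k generalizing u with
  | zero => simpa using dot_eq_zero A w u h
  | succ k ih =>
    have h' := adj_dot_A A w u h
    have := ih (A *ᵥ u) h'
    rwa [Matrix.mulVec_mulVec, ← pow_succ] at this

lemma mInt_mulVec {f : ℝ → Mat n} (hf : Continuous f) (v : Fin n → ℂ) (i : Fin n) :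
    (mInt f *ᵥ v) i = (1 / (2 * π) : ℝ) • ∫ θ in (0:ℝ)..(2 * π), (f θ *ᵥ v) i := by
  simp only [mInt, Matrix.mulVec, dotProduct, Matrix.of_apply]
  simp only [smul_mul_assoc]
  rw [← Finset.smul_sum]
  congr 1
  have hint : ∀ j : Fin n, IntervalIntegrable (fun θ => f θ i j * v j) volume 0 (2 * π) :=
    fun j => ((hf.matrix_elem i j).mul continuous_const).intervalIntegrable _ _
  calc ∑ j, (∫ θ in (0:ℝ)..(2 * π), f θ i j) * v j
      = ∑ j, ∫ θ in (0:ℝ)..(2 * π), f θ i j * v j := by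
        refine Finset.sum_congr rfl fun j _ => ?_
        rw [intervalIntegral.integral_mul_const]
    _ = ∫ θ in (0:ℝ)..(2 * π), ∑ j, f θ i j * v j :=
        (intervalIntegral.integral_finset_sum (fun j _ => hint j)).symm

lemma star_dot_mInt {f : ℝ → Mat n} (hf : Continuous f) (v : Fin n → ℂ) :
    star v ⬝ᵥ (mInt f *ᵥ v) =
      (1 / (2 * π) : ℝ) • ∫ θ in (0:ℝ)..(2 * π), star v ⬝ᵥ (f θ *ᵥ v) := by
  rw [dotProduct]
  simp only [mInt_mulVec hf, mul_smul_comm]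
  rw [← Finset.smul_sum]
  congr 1
  have hint : ∀ i : Fin n, IntervalIntegrable (fun θ => star v i * (f θ *ᵥ v) i)
      volume 0 (2 * π) := fun i =>
    (continuous_const.mul ((continuous_apply i).comp
      (hf.matrix_mulVec continuous_const))).intervalIntegrable _ _
  calc ∑ i, star v i * ∫ θ in (0:ℝ)..(2 * π), (f θ *ᵥ v) i
      = ∑ i, ∫ θ in (0:ℝ)..(2 * π), star v i * (f θ *ᵥ v) i := by
        refine Finset.sum_congr rfl fun i _ => ?_
        rw [intervalIntegral.integral_const_mul]
    _ = ∫ θ in (0:ℝ)..(2 * π), ∑ i, star v i * (f θ *ᵥ v) i :=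
        (intervalIntegral.integral_finset_sum (fun i _ => hint i)).symm
    _ = _ := rfl

lemma integral_conj' {f : ℝ → ℂ} {a b : ℝ} :
    ∫ θ in a..b, (starRingEnd ℂ) (f θ) = (starRingEnd ℂ) (∫ θ in a..b, f θ) := by
  simp only [intervalIntegral]
  rw [_root_.integral_conj, _root_.integral_conj, map_sub]

end Aux

section Aux2

variable {n : ℕ}

lemma fin1_star_dot (z : Fin 1 → ℂ) :
    star z ⬝ᵥ z = ((Complex.normSq (z 0) : ℝ) : ℂ) := by
  rw [dotProduct, Fin.sum_univ_one, Pi.star_apply, Complex.star_def, mul_comm,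
    Complex.mul_conj]

lemma sandwich (S : Mat n) (G : Vec n) (hSH : Sᴴ = S) (a : ℂ) (v : Fin n → ℂ) :
    star v ⬝ᵥ ((a • (S * (G * Gᴴ) * S)) *ᵥ v) =
      a * ((Complex.normSq ((Gᴴ *ᵥ (S *ᵥ v)) 0) : ℝ) : ℂ) := by
  rw [Matrix.smul_mulVec, dotProduct_smul, smul_eq_mul]
  congr 1
  have h1 : (S * (G * Gᴴ) * S) *ᵥ v = S *ᵥ ((G * Gᴴ) *ᵥ (S *ᵥ v)) := by
    rw [Matrix.mulVec_mulVec, Matrix.mulVec_mulVec]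
  rw [h1, Matrix.dotProduct_mulVec]
  have h2 : star v ᵥ* S = star (S *ᵥ v) := by rw [Matrix.star_mulVec, hSH]
  have h3 : (G * Gᴴ) *ᵥ (S *ᵥ v) = G *ᵥ (Gᴴ *ᵥ (S *ᵥ v)) :=
    (Matrix.mulVec_mulVec _ G Gᴴ).symm
  rw [h2, h3, Matrix.dotProduct_mulVec]
  have h4 : star (S *ᵥ v) ᵥ* G = star (Gᴴ *ᵥ (S *ᵥ v)) := by
    conv_rhs => rw [Matrix.star_mulVec, Matrix.conjTranspose_conjTranspose]
  rw [h4, fin1_star_dot]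

lemma mInt_herm {f : ℝ → Mat n} (hherm : ∀ θ, (f θ).IsHermitian) :
    (mInt f).IsHermitian := by
  show (mInt f)ᴴ = mInt f
  ext i j
  rw [Matrix.conjTranspose_apply, mInt, Matrix.of_apply, Matrix.of_apply]
  rw [star_smul, star_trivial]
  congr 1
  show (starRingEnd ℂ) (∫ θ in (0:ℝ)..(2 * π), f θ j i) = ∫ θ in (0:ℝ)..(2 * π), f θ i j
  rw [← integral_conj']
  refine intervalIntegral.integral_congr fun θ _ => ?_
  have := hherm θ
  calc (starRingEnd ℂ) (f θ j i) = (f θ)ᴴ i j := by rw [Matrix.conjTranspose_apply]; rfl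
    _ = f θ i j := by rw [this]

end Aux2

/-- Θ(Λ) has the same kernel (hence rank) as Λ, and preserves
positive definiteness. -/
theorem stmt2 {n : ℕ} (A : Mat n) (B : Vec n) (Ψ : ℝ → ℝ) (Λ : Mat n)
    (hA : IsStable A) (hR : Reachable A B)
    (hΨc : Continuous Ψ) (hΨpos : ∀ θ, 0 < Ψ θ)
    (hΛ : Λ.PosSemidef)
    (hq : ∀ θ, 0 < (quad A B Λ θ).re) :
    (∀ v : Fin n → ℂ, Theta A B Ψ Λ *ᵥ v = 0 ↔ Λ *ᵥ v = 0) ∧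
    (Theta A B Ψ Λ).rank = Λ.rank ∧
    (Λ.PosDef → (Theta A B Ψ Λ).PosDef) := by
  have hπ : (0:ℝ) < π := Real.pi_pos
  have hSeq : msqrt Λ = (hΛ.1.eigenvectorUnitary : Mat n) *
      diagonal ((↑) ∘ Real.sqrt ∘ hΛ.1.eigenvalues) *
      (star hΛ.1.eigenvectorUnitary : Mat n) := dif_pos hΛ
  set S : Mat n := msqrt Λ with hSdef
  have hSps : S.PosSemidef := by
    rw [hSeq]
    have hd : (diagonal ((↑) ∘ Real.sqrt ∘ hΛ.1.eigenvalues) : Mat n).PosSemidef :=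
      PosSemidef.diagonal fun i => by
        simp only [Function.comp_apply, Pi.zero_apply]
        exact Complex.zero_le_real.mpr (Real.sqrt_nonneg _)
    have := hd.mul_mul_conjTranspose_same (hΛ.1.eigenvectorUnitary : Mat n)
    rwa [← Matrix.star_eq_conjTranspose] at this
  have hSH : S.IsHermitian := hSps.1
  have hSS : S * S = Λ := by
    rw [hSeq]
    conv_rhs => rw [hΛ.1.spectral_theorem, Unitary.conjStarAlgAut_apply]
    have hu : (star hΛ.1.eigenvectorUnitary : Mat n) * (hΛ.1.eigenvectorUnitary : Mat n) = 1 :=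
      Unitary.star_mul_self_of_mem hΛ.1.eigenvectorUnitary.2
    have hdd : (diagonal ((↑) ∘ Real.sqrt ∘ hΛ.1.eigenvalues) : Mat n) *
        diagonal ((↑) ∘ Real.sqrt ∘ hΛ.1.eigenvalues) =
        diagonal (RCLike.ofReal ∘ hΛ.1.eigenvalues) := by
      rw [diagonal_mul_diagonal]
      congr 1
      funext i
      simp only [Function.comp_apply]
      rw [← Complex.ofReal_mul, Real.mul_self_sqrt (hΛ.eigenvalues_nonneg i)]
      rfl
    calc _ = (hΛ.1.eigenvectorUnitary : Mat n) *
          ((diagonal ((↑) ∘ Real.sqrt ∘ hΛ.1.eigenvalues) : Mat n) *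
          ((star hΛ.1.eigenvectorUnitary : Mat n) * (hΛ.1.eigenvectorUnitary : Mat n)) *
          diagonal ((↑) ∘ Real.sqrt ∘ hΛ.1.eigenvalues)) *
          (star hΛ.1.eigenvectorUnitary : Mat n) := by simp only [Matrix.mul_assoc]
      _ = _ := by rw [hu, Matrix.mul_one, hdd]
  have hGc : Continuous fun θ => Gm A B θ := cont_G A B hA
  have hQc : Continuous fun θ => quad A B Λ θ := by
    unfold quad
    exact ((hGc.matrix_conjTranspose.matrix_mul continuous_const).matrix_mul hGc).matrix_elem 0 0
  have hQre : ∀ θ, quad A B Λ θ = (((quad A B Λ θ).re : ℝ) : ℂ) := by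
    intro θ
    have hh : ((Gm A B θ)ᴴ * Λ * Gm A B θ).IsHermitian :=
      Matrix.isHermitian_conjTranspose_mul_mul _ hΛ.1
    have hstar : (starRingEnd ℂ) (quad A B Λ θ) = quad A B Λ θ := by
      have h00 : ((Gm A B θ)ᴴ * Λ * Gm A B θ)ᴴ 0 0
          = ((Gm A B θ)ᴴ * Λ * Gm A B θ) 0 0 := by rw [hh]
      rw [Matrix.conjTranspose_apply] at h00
      exact h00
    exact (Complex.conj_eq_iff_re.mp hstar).symm
  have hQne : ∀ θ, quad A B Λ θ ≠ 0 := by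
    intro θ
    rw [hQre θ]
    exact_mod_cast (hq θ).ne'
  have hcoef : ∀ θ, ((Ψ θ : ℂ) / quad A B Λ θ)
      = ((Ψ θ / (quad A B Λ θ).re : ℝ) : ℂ) := by
    intro θ
    rw [Complex.ofReal_div]
    congr 1
    exact hQre θ
  set f : ℝ → Mat n := fun θ => ((Ψ θ : ℂ) / quad A B Λ θ) •
      (S * (Gm A B θ * (Gm A B θ)ᴴ) * S) with hfdef
  have hTheta : Theta A B Ψ Λ = mInt f := by
    rw [hfdef, hSdef]
    rfl
  have hfc : Continuous f := by
    rw [hfdef]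
    exact ((Complex.continuous_ofReal.comp hΨc).div hQc hQne).smul
      ((continuous_const.matrix_mul (hGc.matrix_mul hGc.matrix_conjTranspose)).matrix_mul
        continuous_const)
  have hQrec : Continuous fun θ => (quad A B Λ θ).re := Complex.continuous_re.comp hQc
  -- the core inequality/kernel statement
  have core : ∀ v : Fin n → ℂ, ∃ r : ℝ, 0 ≤ r ∧
      star v ⬝ᵥ (Theta A B Ψ Λ *ᵥ v) = (r : ℂ) ∧ (r = 0 → Λ *ᵥ v = 0) := by
    intro v
    set y : Fin n → ℂ := S *ᵥ v with hydef
    set c : ℝ → ℂ := fun θ => ((Gm A B θ)ᴴ *ᵥ y) 0 with hcdef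
    set g : ℝ → ℝ := fun θ => Ψ θ / (quad A B Λ θ).re * Complex.normSq (c θ) with hgdef
    have hcc : Continuous c := by
      rw [hcdef]
      exact (continuous_apply 0).comp (hGc.matrix_conjTranspose.matrix_mulVec continuous_const)
    have hgc : Continuous g := by
      rw [hgdef]
      exact (hΨc.div hQrec fun θ => (hq θ).ne').mul (Complex.continuous_normSq.comp hcc)
    have hgnn : ∀ θ, 0 ≤ g θ := fun θ =>
      mul_nonneg (div_nonneg (hΨpos θ).le (hq θ).le) (Complex.normSq_nonneg _)
    have hpt : ∀ θ, star v ⬝ᵥ (f θ *ᵥ v) = ((g θ : ℝ) : ℂ) := by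
      intro θ
      simp only [hfdef]
      rw [sandwich S (Gm A B θ) hSH.eq _ v, hcoef θ, ← Complex.ofReal_mul]
    refine ⟨sIntR g, ?_, ?_, ?_⟩
    · apply mul_nonneg (by positivity)
      exact intervalIntegral.integral_nonneg (by positivity) fun u _ => hgnn u
    · rw [hTheta, star_dot_mInt hfc,
        intervalIntegral.integral_congr (g := fun θ => ((g θ : ℝ) : ℂ)) fun θ _ => hpt θ,
        intervalIntegral.integral_ofReal, Complex.real_smul, ← Complex.ofReal_mul, sIntR]
    · intro hr0
      have h2πne : (1 / (2 * π) : ℝ) ≠ 0 := by positivity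
      have hI : ∫ θ in (0:ℝ)..(2 * π), g θ = 0 := by
        rcases mul_eq_zero.mp hr0 with h | h
        · exact absurd h h2πne
        · exact h
      have hvan := vanish hgc hgnn hI
      set Bf : Fin n → ℂ := fun j => B j 0 with hBfdef
      have hGcol : ∀ θ (i : Fin n), Gm A B θ i 0
          = (((circPt θ • (1:Mat n) - A)⁻¹) *ᵥ Bf) i := by
        intro θ i
        simp [Gm, Matrix.mul_apply, Matrix.mulVec, dotProduct, hBfdef]
      have hstarc : ∀ θ, (starRingEnd ℂ) (c θ) = star y ⬝ᵥ (fun i => Gm A B θ i 0) := by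
        intro θ
        simp only [hcdef]
        simp [Matrix.mulVec, dotProduct, Matrix.conjTranspose_apply, map_sum,
          _root_.map_mul, mul_comm, Pi.star_apply, Complex.star_def]
      have hadj : ∀ θ ∈ Set.Ioo (0:ℝ) (2 * π),
          star y ⬝ᵥ ((circPt θ • (1:Mat n) - A).adjugate *ᵥ Bf) = 0 := by
        intro θ hθ
        have hg0 : g θ = 0 := hvan θ hθ
        have hns : Complex.normSq (c θ) = 0 := by
          have hcoefpos : 0 < Ψ θ / (quad A B Λ θ).re := div_pos (hΨpos θ) (hq θ)
          rw [hgdef] at hg0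
          rcases mul_eq_zero.mp hg0 with h | h
          · exact absurd h hcoefpos.ne'
          · exact h
        have hc0 : c θ = 0 := Complex.normSq_eq_zero.mp hns
        have hinv0 : star y ⬝ᵥ (((circPt θ • (1:Mat n) - A)⁻¹) *ᵥ Bf) = 0 := by
          have h1 := hstarc θ
          rw [hc0, map_zero] at h1
          have hfun : (fun i => Gm A B θ i 0) = ((circPt θ • (1:Mat n) - A)⁻¹) *ᵥ Bf :=
            funext fun i => hGcol θ i
          rw [hfun] at h1
          exact h1.symm
        have hdet := det_circ_ne A hA θ
        have hadjeq : (circPt θ • (1:Mat n) - A).adjugate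
            = (circPt θ • (1:Mat n) - A).det • ((circPt θ • (1:Mat n) - A)⁻¹) := by
          rw [inv_eq_det_smul, smul_smul, mul_inv_cancel₀ hdet, one_smul]
        rw [hadjeq, Matrix.smul_mulVec, dotProduct_smul, hinv0, smul_zero]
      have hall := adj_dot_zero_all A (star y) Bf hadj
      have hpow := dot_pow A (star y) Bf hall
      have htop : LinearMap.range (Matrix.of fun (i : Fin n) (k : Fin n) =>
          (A ^ (k : ℕ) * B) i 0).mulVecLin = ⊤ := by
        apply Submodule.eq_top_of_finrank_eq
        rw [show Module.finrank ℂ (Fin n → ℂ) = n by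
          rw [Module.finrank_fintype_fun_eq_card, Fintype.card_fin]]
        exact hR
      have hx : ∀ x : Fin n → ℂ, star y ⬝ᵥ x = 0 := by
        intro x
        have hmem : x ∈ LinearMap.range (Matrix.of fun (i : Fin n) (k : Fin n) =>
            (A ^ (k : ℕ) * B) i 0).mulVecLin := by
          rw [htop]; trivial
        obtain ⟨z', hz'⟩ := hmem
        rw [← hz', Matrix.mulVecLin_apply, Matrix.dotProduct_mulVec]
        have hvm : star y ᵥ* (Matrix.of fun (i : Fin n) (k : Fin n) =>
            (A ^ (k : ℕ) * B) i 0) = 0 := by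
          funext k
          show star y ⬝ᵥ (fun i => (Matrix.of fun (i : Fin n) (k : Fin n) =>
            (A ^ (k : ℕ) * B) i 0) i k) = 0
          have hcol : (fun i => (Matrix.of fun (i : Fin n) (k : Fin n) =>
              (A ^ (k : ℕ) * B) i 0) i k) = (A ^ (k : ℕ)) *ᵥ Bf := by
            funext i
            simp [Matrix.mul_apply, Matrix.mulVec, dotProduct, hBfdef]
          rw [hcol]
          exact hpow (k : ℕ)
        rw [hvm, zero_dotProduct]
      have hw0 : star y = 0 := by
        funext i
        have := hx (Pi.single i 1)
        rw [dotProduct_single_one] at this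
        simpa using this
      have hy0 : y = 0 := by
        have := congrArg star hw0
        simpa using this
      show Λ *ᵥ v = 0
      rw [← hSS, ← Matrix.mulVec_mulVec, ← hydef, hy0, Matrix.mulVec_zero]
  have backward : ∀ v, Λ *ᵥ v = 0 → Theta A B Ψ Λ *ᵥ v = 0 := by
    intro v hv
    have hyv : S *ᵥ v = 0 := by
      have hyd : star (S *ᵥ v) ⬝ᵥ (S *ᵥ v) = star v ⬝ᵥ (Λ *ᵥ v) := by
        rw [Matrix.star_mulVec, hSH.eq, ← Matrix.dotProduct_mulVec,
          Matrix.mulVec_mulVec, hSS]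
      rw [hv, dotProduct_zero] at hyd
      exact dotProduct_star_self_eq_zero.mp hyd
    rw [hTheta]
    funext i
    rw [show ((0 : Fin n → ℂ) i) = 0 from rfl, mInt_mulVec hfc]
    have hzero : ∀ θ, f θ *ᵥ v = 0 := by
      intro θ
      simp only [hfdef]
      rw [Matrix.smul_mulVec,
        show (S * (Gm A B θ * (Gm A B θ)ᴴ) * S) *ᵥ v
          = S *ᵥ ((Gm A B θ * (Gm A B θ)ᴴ) *ᵥ (S *ᵥ v)) by
            rw [Matrix.mulVec_mulVec, Matrix.mulVec_mulVec],
        hyv, Matrix.mulVec_zero, Matrix.mulVec_zero, smul_zero]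
    simp only [hzero, Pi.zero_apply, intervalIntegral.integral_zero, smul_zero]
  have forward : ∀ v, Theta A B Ψ Λ *ᵥ v = 0 → Λ *ᵥ v = 0 := by
    intro v hv
    obtain ⟨r, hr0, hid, hker⟩ := core v
    apply hker
    have : (r : ℂ) = 0 := by rw [← hid, hv, dotProduct_zero]
    exact_mod_cast this
  have hkers : LinearMap.ker (Theta A B Ψ Λ).mulVecLin = LinearMap.ker Λ.mulVecLin := by
    ext x
    simp only [LinearMap.mem_ker, Matrix.mulVecLin_apply]
    exact ⟨forward x, backward x⟩
  have hrank : (Theta A B Ψ Λ).rank = Λ.rank := by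
    have h1 := LinearMap.finrank_range_add_finrank_ker (Theta A B Ψ Λ).mulVecLin
    have h2 := LinearMap.finrank_range_add_finrank_ker Λ.mulVecLin
    rw [hkers] at h1
    rw [Matrix.rank, Matrix.rank]
    omega
  have hherm : (Theta A B Ψ Λ).IsHermitian := by
    rw [hTheta]
    apply mInt_herm
    intro θ
    show (f θ)ᴴ = f θ
    simp only [hfdef]
    rw [hcoef θ, Matrix.conjTranspose_smul]
    congr 1
    · exact Complex.conj_ofReal _
    · simp [Matrix.conjTranspose_mul, Matrix.conjTranspose_conjTranspose, hSH.eq,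
        Matrix.mul_assoc]
  refine ⟨fun v => ⟨forward v, backward v⟩, hrank, ?_⟩
  intro hPD
  refine PosDef.of_dotProduct_mulVec_pos hherm fun v hv => ?_
  obtain ⟨r, hr0, hid, hker⟩ := core v
  have hrne : r ≠ 0 := by
    intro h0
    have hΛv := hker h0
    have hlt := hPD.dotProduct_mulVec_pos hv
    rw [hΛv, dotProduct_zero] at hlt
    exact lt_irrefl 0 hlt
  rw [hid]
  exact Complex.zero_lt_real.mpr (lt_of_le_of_ne hr0 (Ne.symm hrne))

end
end

section
/- Let G(z) = (zI-A)^{-1}B with (A,B) reachable, and let Λ be Hermitian with G*ΛG > 0 on the unit circle. Let P be the stabilizing Hermitian solution of the algebraic Riccati equation Π = A*ΠA - A*ΠB(B*ΠB)^{-1}B*ΠA + Λ (so that Z := A - B(B*PB)^{-1}B*PA has spectrum in the open unit disc, and B*PB > 0). Then G*(z)ΛG(z) = W*(z)W(z) on the unit circle, where W(z) = (B*PB)^{-1/2} B*PA (zI-A)^{-1} B + (B*PB)^{1/2}. -/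
open Matrix MeasureTheory Real Filter
open scoped ComplexOrder

noncomputable section

/-- The spectral factor W(z) = (B*PB)^{-1/2} B*PA (zI-A)⁻¹ B + (B*PB)^{1/2}. -/
def Wfac {n : ℕ} (A : Mat n) (B : Vec n) (P : Mat n) (θ : ℝ) :
    Matrix (Fin 1) (Fin 1) ℂ :=
  ((Real.sqrt ((Bᴴ * P * B) 0 0).re)⁻¹ : ℝ) •
      (Bᴴ * P * A * (circPt θ • (1 : Mat n) - A)⁻¹ * B)
    + (Real.sqrt ((Bᴴ * P * B) 0 0).re : ℝ) • (1 : Matrix (Fin 1) (Fin 1) ℂ)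

/-- spectral factorization G*ΛG = W*W on the unit circle, with W
built from the stabilizing solution P of the algebraic Riccati equation. -/
theorem stmt18 {n : ℕ} (A : Mat n) (B : Vec n) (Λ P : Mat n)
    (hR : Reachable A B) (hΛ : Λ.IsHermitian)
    (hU : ∀ θ : ℝ, IsUnit (circPt θ • (1 : Mat n) - A))
    (hq : ∀ θ, 0 < (quad A B Λ θ).re)
    (hP : P.IsHermitian)
    (hRic : P = Aᴴ * P * A - Aᴴ * P * B * (Bᴴ * P * B)⁻¹ * (Bᴴ * P * A) + Λ)
    (hBPB : 0 < ((Bᴴ * P * B) 0 0).re)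
    (hstab : ∀ μ ∈ spectrum ℂ (A - B * (Bᴴ * P * B)⁻¹ * (Bᴴ * P * A)), ‖μ‖ < 1) :
    ∀ θ : ℝ, quad A B Λ θ = ((Wfac A B P θ)ᴴ * Wfac A B P θ) 0 0 := by
  intro θ
  simp only [quad, Gm, Wfac]
  rw [Matrix.mul_assoc (Bᴴ * P * A)]
  set z := circPt θ with hz
  set g := (z • (1 : Mat n) - A)⁻¹ * B with hg
  -- basic scalar facts
  have hzz : star z * z = 1 := by
    rw [hz]
    simp only [circPt]
    have h1 : star (Complex.exp ((θ:ℂ) * Complex.I)) =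
        Complex.exp (-((θ:ℂ) * Complex.I)) := by
      rw [Complex.star_def, ← Complex.exp_conj]
      congr 1
      simp [Complex.ext_iff]
    rw [h1, ← Complex.exp_add, neg_add_cancel, Complex.exp_zero]
  have hdet : IsUnit (z • (1 : Mat n) - A).det :=
    (Matrix.isUnit_iff_isUnit_det _).mp (by rw [hz]; exact hU θ)
  have h0 : (z • (1 : Mat n) - A) * g = B := by
    rw [hg, Matrix.mul_nonsing_inv_cancel_left _ _ hdet]
  have hAg : A * g = z • g - B := by
    rw [← h0, Matrix.sub_mul, Matrix.smul_mul, Matrix.one_mul]; abel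
  clear_value z g
  clear hz hg h0
  set b : ℂ := (Bᴴ * P * B) 0 0 with hb
  have hherm : (Bᴴ * P * B)ᴴ = Bᴴ * P * B := by
    rw [Matrix.conjTranspose_mul, Matrix.conjTranspose_mul, hP.eq,
      Matrix.conjTranspose_conjTranspose, Matrix.mul_assoc]
  have hbstar : star b = b := by
    have := congrFun (congrFun hherm 0) 0
    simpa [Matrix.conjTranspose_apply, hb] using this
  have hbre : ((b.re : ℝ) : ℂ) = b := by
    have him : b.im = 0 := by
      have := congrArg Complex.im hbstar
      simp only [Complex.star_def, Complex.conj_im] at this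
      linarith
    exact Complex.ext (by simp) (by simp [him])
  have hbpos : 0 < b.re := hBPB
  have hbne : b ≠ 0 := by
    intro h; rw [h] at hbpos; simp at hbpos
  have hinv : (Bᴴ * P * B)⁻¹ = b⁻¹ • (1 : Matrix (Fin 1) (Fin 1) ℂ) := by
    apply Matrix.inv_eq_left_inv
    rw [Matrix.smul_mul, Matrix.one_mul]
    ext i j
    fin_cases i; fin_cases j
    simp [Matrix.smul_apply, hb, inv_mul_cancel₀ hbne, Matrix.one_apply]
    exact inv_mul_cancel₀ hbne
  set β : ℝ := Real.sqrt b.re with hβ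
  have hβpos : 0 < β := Real.sqrt_pos.mpr hbpos
  have hβne : (β : ℂ) ≠ 0 := by
    simp [Complex.ext_iff, hβpos.ne']
  have hββ : (β : ℂ) * (β : ℂ) = b := by
    rw [← Complex.ofReal_mul, hβ, Real.mul_self_sqrt hbpos.le, hbre]
  set s : ℂ := (Bᴴ * P * g) 0 0 with hs
  set r : ℂ := (gᴴ * P * g) 0 0 with hr
  have hgPB : gᴴ * P * B = (Bᴴ * P * g)ᴴ := by
    rw [Matrix.conjTranspose_mul, Matrix.conjTranspose_mul, hP.eq,
      Matrix.conjTranspose_conjTranspose, Matrix.mul_assoc]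
  have hgPB0 : (gᴴ * P * B) 0 0 = star s := by
    rw [hgPB]; simp [Matrix.conjTranspose_apply, hs]
  -- u = Bᴴ P A g
  have hu : Bᴴ * P * A * g = z • (Bᴴ * P * g) - Bᴴ * P * B := by
    rw [Matrix.mul_assoc (Bᴴ * P) A g, hAg, Matrix.mul_sub, Matrix.mul_smul,
      Matrix.mul_assoc, Matrix.mul_assoc]
  have hu0 : (Bᴴ * P * A * g) 0 0 = z * s - b := by
    rw [hu]; simp [Matrix.sub_apply, Matrix.smul_apply, hs, hb, smul_eq_mul]
  have hgA : gᴴ * Aᴴ = star z • gᴴ - Bᴴ := by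
    rw [← Matrix.conjTranspose_mul, hAg]
    simp [Matrix.conjTranspose_smul]
  -- second-order term
  have h2 : gᴴ * Aᴴ * P * (A * g) =
      gᴴ * P * g - star z • (gᴴ * P * B) - z • (Bᴴ * P * g) + Bᴴ * P * B := by
    rw [Matrix.mul_assoc (gᴴ * Aᴴ) P (A * g)]
    rw [hAg, hgA]
    simp only [Matrix.sub_mul, Matrix.smul_mul, Matrix.mul_sub, Matrix.mul_smul,
      smul_sub, smul_smul, hzz, mul_comm z (star z), one_smul, ← Matrix.mul_assoc]
    abel
  have hAPB : gᴴ * Aᴴ * P * B = (Bᴴ * P * A * g)ᴴ := by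
    rw [Matrix.conjTranspose_mul, Matrix.conjTranspose_mul, Matrix.conjTranspose_mul,
      Matrix.conjTranspose_conjTranspose, hP.eq, Matrix.mul_assoc (gᴴ * Aᴴ),
      Matrix.mul_assoc gᴴ]
  -- rearranged Riccati equation
  have hLam : Λ = P - (Aᴴ * P * A - Aᴴ * P * B * (Bᴴ * P * B)⁻¹ * (Bᴴ * P * A)) := by
    nth_rewrite 1 [hRic]; abel
  -- expand the quadratic form
  have hLHS : gᴴ * Λ * g = gᴴ * P * g - gᴴ * Aᴴ * P * (A * g) +
      (Bᴴ * P * A * g)ᴴ * ((Bᴴ * P * B)⁻¹ * (Bᴴ * P * A * g)) := by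
    rw [hLam]
    rw [Matrix.mul_sub, Matrix.sub_mul, Matrix.mul_sub, Matrix.sub_mul, ← hAPB]
    simp only [Matrix.mul_assoc]
    abel
  -- entry computation
  have e11 : ∀ (X Y : Matrix (Fin 1) (Fin 1) ℂ), (X * Y) 0 0 = X 0 0 * Y 0 0 := by
    intro X Y; simp [Matrix.mul_apply]
  have hL0 : (gᴴ * Λ * g) 0 0 =
      star z * star s + z * s - b + (star z * star s - b) * (b⁻¹ * (z * s - b)) := by
    rw [hLHS]
    simp only [Matrix.add_apply, Matrix.sub_apply]
    rw [h2, hinv]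
    simp only [Matrix.add_apply, Matrix.sub_apply, Matrix.smul_apply, hgPB0,
      Matrix.smul_mul, Matrix.one_mul]
    rw [e11]
    simp only [Matrix.conjTranspose_apply, Matrix.smul_apply, hu0, smul_eq_mul]
    have : star (z * s - b) = star z * star s - b := by
      simp [star_sub, star_mul', hbstar]
    rw [this, ← hr, ← hs, ← hb]
    ring
  rw [hL0]
  -- right-hand side
  have hW0 : ((β⁻¹ : ℝ) • (Bᴴ * P * A * g) + (β : ℝ) • (1 : Matrix (Fin 1) (Fin 1) ℂ)) 0 0
      = (β : ℂ)⁻¹ * (z * s - b) + (β : ℂ) := by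
    simp only [Matrix.add_apply, Matrix.smul_apply, hu0, Matrix.one_apply_eq,
      Complex.real_smul, Complex.ofReal_inv, smul_eq_mul, mul_one]
  rw [e11]
  have hWH : (((β⁻¹ : ℝ) • (Bᴴ * P * A * g) + (β : ℝ) • (1 : Matrix (Fin 1) (Fin 1) ℂ))ᴴ) 0 0
      = star ((β : ℂ)⁻¹ * (z * s - b) + (β : ℂ)) := by
    simp only [Matrix.conjTranspose_apply, hW0]
  rw [hWH, hW0]
  have hst : star ((β : ℂ)⁻¹ * (z * s - b) + (β : ℂ)) =
      (β : ℂ)⁻¹ * (star z * star s - b) + (β : ℂ) := by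
    simp [star_add, star_mul', star_sub, hbstar, Complex.conj_ofReal]
  rw [hst, ← hββ]
  field_simp
  ring
end
end

section
/- Under the setup of the spectral factorization lemma, the spectral factor W(z) = (B*PB)^{-1/2} B*PA(zI-A)^{-1}B + (B*PB)^{1/2} satisfies W(z) = z·(B*PB)^{-1/2} B*P (zI-A)^{-1} B; consequently G*ΛG = W_1* W_1 with W_1(z) := (B*PB)^{-1/2} B*P (zI-A)^{-1} B, and hence there exists a vector C_∘ ∈ C^{n×1} (namely C_∘ = ((B*PB)^{-1/2}B*P)*) such that G*ΛG = G* C_∘ C_∘* G on the unit circle. -/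
open Matrix MeasureTheory Real Filter
open scoped ComplexOrder

noncomputable section

/-- W₁(z) = (B*PB)^{-1/2} B*P (zI-A)⁻¹ B. -/
def W1fac {n : ℕ} (A : Mat n) (B : Vec n) (P : Mat n) (θ : ℝ) :
    Matrix (Fin 1) (Fin 1) ℂ :=
  ((Real.sqrt ((Bᴴ * P * B) 0 0).re)⁻¹ : ℝ) •
    (Bᴴ * P * (circPt θ • (1 : Mat n) - A)⁻¹ * B)

set_option maxHeartbeats 1000000 in
/-- W = z·W₁ on the circle, hence G*ΛG = W₁*W₁, and with
C∘ = ((B*PB)^{-1/2} B*P)* one has G*ΛG = G* C∘ C∘* G on the unit circle. -/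
theorem stmt19 {n : ℕ} (A : Mat n) (B : Vec n) (Λ P : Mat n)
    (hR : Reachable A B) (hΛ : Λ.IsHermitian)
    (hU : ∀ θ : ℝ, IsUnit (circPt θ • (1 : Mat n) - A))
    (hq : ∀ θ, 0 < (quad A B Λ θ).re)
    (hP : P.IsHermitian)
    (hRic : P = Aᴴ * P * A - Aᴴ * P * B * (Bᴴ * P * B)⁻¹ * (Bᴴ * P * A) + Λ)
    (hBPB : 0 < ((Bᴴ * P * B) 0 0).re)
    (hstab : ∀ μ ∈ spectrum ℂ (A - B * (Bᴴ * P * B)⁻¹ * (Bᴴ * P * A)), ‖μ‖ < 1) :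
    (∀ θ : ℝ, Wfac A B P θ = circPt θ • W1fac A B P θ) ∧
    (∀ θ : ℝ, quad A B Λ θ = ((W1fac A B P θ)ᴴ * W1fac A B P θ) 0 0) ∧
    (∀ θ : ℝ, quad A B Λ θ =
      ((Gm A B θ)ᴴ *
        ((((Real.sqrt ((Bᴴ * P * B) 0 0).re)⁻¹ : ℝ) • (Bᴴ * P)ᴴ) *
         (((Real.sqrt ((Bᴴ * P * B) 0 0).re)⁻¹ : ℝ) • (Bᴴ * P)ᴴ)ᴴ) *
        Gm A B θ) 0 0) := by
  set c : ℝ := Real.sqrt ((Bᴴ * P * B) 0 0).re with hcdef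
  have hc0 : 0 < c := Real.sqrt_pos.mpr hBPB
  have hcC : ((c : ℂ)) ≠ 0 := by exact_mod_cast hc0.ne'
  have hc2' : c ^ 2 = ((Bᴴ * P * B) 0 0).re := by
    rw [hcdef]; exact Real.sq_sqrt hBPB.le
  have hherm : (Bᴴ * P * B)ᴴ = Bᴴ * P * B := by
    simp [Matrix.conjTranspose_mul, hP.eq, Matrix.mul_assoc]
  have hre : ((c : ℂ) ^ 2) = (Bᴴ * P * B) 0 0 := by
    have h00 : (starRingEnd ℂ) ((Bᴴ * P * B) 0 0) = (Bᴴ * P * B) 0 0 := by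
      have := congrFun (congrFun hherm 0) 0
      simpa [Matrix.conjTranspose_apply] using this
    have hrr : ((((Bᴴ * P * B) 0 0).re : ℝ) : ℂ) = (Bᴴ * P * B) 0 0 :=
      Complex.conj_eq_iff_re.mp h00
    rw [← hrr, ← hc2']
    push_cast
    ring
  have hBPBc : Bᴴ * P * B = ((c : ℂ) ^ 2) • (1 : Matrix (Fin 1) (Fin 1) ℂ) := by
    ext i j
    fin_cases i; fin_cases j
    simp [hre]
  have hBPBc' : Bᴴ * (P * B) = ((c : ℂ) ^ 2) • (1 : Matrix (Fin 1) (Fin 1) ℂ) := by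
    rw [← Matrix.mul_assoc]; exact hBPBc
  have hKinv : (Bᴴ * P * B)⁻¹ = (((c : ℂ) ^ 2)⁻¹) • (1 : Matrix (Fin 1) (Fin 1) ℂ) := by
    apply Matrix.inv_eq_right_inv
    rw [hBPBc, smul_mul_smul_comm]
    rw [mul_inv_cancel₀ (pow_ne_zero 2 hcC)]
    simp
  have hsm : ∀ (m k : ℕ) (r : ℝ) (M : Matrix (Fin m) (Fin k) ℂ),
      (r : ℝ) • M = ((r : ℂ)) • M := by
    intro m k r M; ext i j; simp [Complex.real_smul]
  have hz : ∀ θ : ℝ, (starRingEnd ℂ) (circPt θ) * circPt θ = 1 := by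
    intro θ
    rw [circPt, ← Complex.exp_conj, ← Complex.exp_add]
    simp [Complex.ext_iff]
  have hdet : ∀ θ : ℝ, IsUnit (circPt θ • (1 : Mat n) - A).det := fun θ =>
    (Matrix.isUnit_iff_isUnit_det _).mp (hU θ)
  have hMG : ∀ θ : ℝ, (circPt θ • (1 : Mat n) - A) * Gm A B θ = B := by
    intro θ
    rw [Gm, ← Matrix.mul_assoc, Matrix.mul_nonsing_inv _ (hdet θ), Matrix.one_mul]
  have hGM : ∀ θ : ℝ, (Gm A B θ)ᴴ * (circPt θ • (1 : Mat n) - A)ᴴ = Bᴴ := by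
    intro θ; rw [← Matrix.conjTranspose_mul, hMG]
  -- W in complex-smul, right-associated form
  have hW : ∀ θ : ℝ, Wfac A B P θ
      = ((c : ℂ))⁻¹ • (Bᴴ * (P * (A * Gm A B θ))) + (c : ℂ) • 1 := by
    intro θ
    rw [Wfac, hsm, hsm, Complex.ofReal_inv, Gm]
    simp only [Matrix.mul_assoc]
    rw [← Matrix.mul_assoc Bᴴ P B]
  have hW1 : ∀ θ : ℝ, W1fac A B P θ
      = ((c : ℂ))⁻¹ • (Bᴴ * (P * Gm A B θ)) := by
    intro θ
    rw [W1fac, hsm, Complex.ofReal_inv, Gm]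
    simp only [Matrix.mul_assoc]
    rw [← Matrix.mul_assoc Bᴴ P B]
  -- Part 1
  have part1 : ∀ θ : ℝ, Wfac A B P θ = circPt θ • W1fac A B P θ := by
    intro θ
    have hzi : circPt θ • ((circPt θ • (1 : Mat n) - A)⁻¹) =
        A * (circPt θ • (1 : Mat n) - A)⁻¹ + 1 := by
      have h1 : (circPt θ • (1 : Mat n) - A) * (circPt θ • (1 : Mat n) - A)⁻¹ = 1 :=
        Matrix.mul_nonsing_inv _ (hdet θ)
      rw [Matrix.sub_mul, Matrix.smul_mul, Matrix.one_mul, sub_eq_iff_eq_add] at h1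
      rw [h1, add_comm]
    have hzG : circPt θ • Gm A B θ = A * Gm A B θ + B := by
      rw [Gm, ← Matrix.smul_mul, hzi, Matrix.add_mul, Matrix.one_mul, Matrix.mul_assoc]
    rw [hW θ, hW1 θ, smul_comm (circPt θ) (((c : ℂ))⁻¹)]
    rw [show circPt θ • (Bᴴ * (P * Gm A B θ)) = Bᴴ * (P * (circPt θ • Gm A B θ)) by
      simp [Matrix.mul_smul]]
    rw [hzG, Matrix.mul_add, Matrix.mul_add, smul_add]
    congr 1
    rw [hBPBc', smul_smul]
    rw [show ((c : ℂ))⁻¹ * (c : ℂ) ^ 2 = (c : ℂ) by field_simp]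
  -- W1ᴴ W1 = Wᴴ W on the circle
  have hWW : ∀ θ : ℝ, (W1fac A B P θ)ᴴ * W1fac A B P θ
      = (Wfac A B P θ)ᴴ * Wfac A B P θ := by
    intro θ
    rw [part1 θ, Matrix.conjTranspose_smul, Matrix.smul_mul, Matrix.mul_smul,
      smul_smul]
    rw [show (star (circPt θ)) * circPt θ = 1 from hz θ, one_smul]
  -- key: G* Λ G = Wᴴ W
  have key : ∀ θ : ℝ, (Gm A B θ)ᴴ * Λ * Gm A B θ
      = (Wfac A B P θ)ᴴ * Wfac A B P θ := by
    intro θ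
    have hLam : Λ = (circPt θ • (1 : Mat n) - A)ᴴ * P * (circPt θ • (1 : Mat n) - A)
        + (circPt θ • (1 : Mat n) - A)ᴴ * (P * A)
        + Aᴴ * (P * (circPt θ • (1 : Mat n) - A))
        + Aᴴ * P * B * (Bᴴ * P * B)⁻¹ * (Bᴴ * P * A) := by
      have hEq : P - Aᴴ * P * A
          = (circPt θ • (1 : Mat n) - A)ᴴ * P * (circPt θ • (1 : Mat n) - A)
          + (circPt θ • (1 : Mat n) - A)ᴴ * (P * A)
          + Aᴴ * (P * (circPt θ • (1 : Mat n) - A)) := by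
        have hMH : (circPt θ • (1 : Mat n) - A)ᴴ
            = (starRingEnd ℂ) (circPt θ) • (1 : Mat n) - Aᴴ := by
          simp [Matrix.conjTranspose_smul]
        have hz2 : circPt θ * (starRingEnd ℂ) (circPt θ) = 1 := by
          rw [mul_comm]; exact hz θ
        rw [hMH]
        simp only [Matrix.sub_mul, Matrix.mul_sub, Matrix.smul_mul, Matrix.mul_smul,
          Matrix.one_mul, Matrix.mul_one, smul_smul, hz θ, hz2, one_smul, smul_sub,
          Matrix.mul_assoc]
        abel
      have hLam' : Λ = P - Aᴴ * P * A + Aᴴ * P * B * (Bᴴ * P * B)⁻¹ * (Bᴴ * P * A) := by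
        nth_rewrite 1 [hRic]
        abel
      rw [hLam', hEq]
    have hGMX : ∀ X : Matrix (Fin n) (Fin 1) ℂ,
        (Gm A B θ)ᴴ * ((circPt θ • (1 : Mat n) - A)ᴴ * X) = Bᴴ * X := by
      intro X; rw [← Matrix.mul_assoc, hGM θ]
    have e1 : (Gm A B θ)ᴴ * ((circPt θ • (1 : Mat n) - A)ᴴ * P
          * (circPt θ • (1 : Mat n) - A)) * Gm A B θ = Bᴴ * (P * B) := by
      simp only [Matrix.mul_assoc]
      rw [hMG θ, hGMX]
    have e2 : (Gm A B θ)ᴴ * ((circPt θ • (1 : Mat n) - A)ᴴ * (P * A)) * Gm A B θ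
        = Bᴴ * (P * (A * Gm A B θ)) := by
      simp only [Matrix.mul_assoc]
      rw [hGMX]
    have e3 : (Gm A B θ)ᴴ * (Aᴴ * (P * (circPt θ • (1 : Mat n) - A))) * Gm A B θ
        = (Gm A B θ)ᴴ * (Aᴴ * (P * B)) := by
      simp only [Matrix.mul_assoc]
      rw [hMG θ]
    have e4 : (Gm A B θ)ᴴ * (Aᴴ * P * B * (Bᴴ * P * B)⁻¹ * (Bᴴ * P * A)) * Gm A B θ
        = (((c : ℂ) ^ 2)⁻¹) • (((Gm A B θ)ᴴ * (Aᴴ * (P * B)))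
            * (Bᴴ * (P * (A * Gm A B θ)))) := by
      rw [hKinv]
      simp only [Matrix.mul_smul, Matrix.smul_mul, Matrix.mul_one, Matrix.mul_assoc]
    have hWH : (Wfac A B P θ)ᴴ
        = ((c : ℂ))⁻¹ • ((Gm A B θ)ᴴ * (Aᴴ * (P * B))) + (c : ℂ) • 1 := by
      rw [hW θ]
      simp only [Matrix.conjTranspose_add, Matrix.conjTranspose_smul,
        Matrix.conjTranspose_mul, Matrix.conjTranspose_one, hP.eq,
        Matrix.conjTranspose_conjTranspose,
        Complex.star_def, map_inv₀, Complex.conj_ofReal, Matrix.mul_assoc]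
    rw [hLam, hWH, hW θ]
    simp only [Matrix.mul_add, Matrix.add_mul]
    rw [e1, e2, e3, e4]
    simp only [Matrix.smul_mul, Matrix.mul_smul, Matrix.mul_one, Matrix.one_mul,
      smul_smul]
    rw [inv_mul_cancel₀ hcC, mul_inv_cancel₀ hcC, one_smul, one_smul, hBPBc']
    rw [show ((c : ℂ))⁻¹ * ((c : ℂ))⁻¹ = (((c : ℂ)) ^ 2)⁻¹ by rw [← mul_inv]; ring_nf]
    rw [show (c : ℂ) * (c : ℂ) = ((c : ℂ)) ^ 2 by ring]
    abel
  -- Part 2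
  have part2 : ∀ θ : ℝ, quad A B Λ θ = ((W1fac A B P θ)ᴴ * W1fac A B P θ) 0 0 := by
    intro θ
    rw [quad, key θ, hWW θ]
  refine ⟨part1, part2, ?_⟩
  intro θ
  have hmat : (W1fac A B P θ)ᴴ * W1fac A B P θ
      = (Gm A B θ)ᴴ *
        ((((c)⁻¹ : ℝ) • (Bᴴ * P)ᴴ) * (((c)⁻¹ : ℝ) • (Bᴴ * P)ᴴ)ᴴ) * Gm A B θ := by
    rw [hW1 θ]
    simp only [hsm, Complex.ofReal_inv]
    simp only [Matrix.conjTranspose_smul, Matrix.conjTranspose_mul,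
      Matrix.conjTranspose_conjTranspose, Complex.star_def, map_inv₀,
      Complex.conj_ofReal, hP.eq, Matrix.smul_mul, Matrix.mul_smul, smul_smul,
      Gm, Matrix.mul_assoc]
  rw [part2 θ, hmat]
end
end
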